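/- For each semantics σ ∈ {naive, stb, stage, pref, sem} and every n ∈ ℕ: σ_max(n) = 1 if n = 0 or n = 1; σ_max(n) = 3^s if n ≥ 2 and n = 3s; σ_max(n) = 4·3^{s−1} if n ≥ 2 and n = 3s+1; σ_max(n) = 2·3^s if n ≥ 2 and n = 3s+2. -/

import Mathlib

structure AF where
  A : Finset ℕ
  R : Set (ℕ × ℕ)
  R_sub : ∀ p ∈ R, p.1 ∈ A ∧ p.2 ∈ A

namespace AF

def cf (F : AF) : Set (Set ℕ) :=
  {S | S ⊆ ↑F.A ∧ ∀ a ∈ S, ∀ b ∈ S, (a, b) ∉ F.R}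

def defends (F : AF) (S : Set ℕ) (a : ℕ) : Prop :=
  ∀ b, (b, a) ∈ F.R → ∃ s ∈ S, (s, b) ∈ F.R

def adm (F : AF) : Set (Set ℕ) :=
  {S | S ∈ F.cf ∧ ∀ a ∈ S, F.defends S a}

def rng (F : AF) (S : Set ℕ) : Set ℕ :=
  S ∪ {b | ∃ s ∈ S, (s, b) ∈ F.R}

def naive (F : AF) : Set (Set ℕ) :=
  {S | S ∈ F.cf ∧ ∀ T ∈ F.cf, S ⊆ T → S = T}

def stb (F : AF) : Set (Set ℕ) :=
  {S | S ∈ F.cf ∧ ∀ a ∈ F.A, a ∉ S → ∃ s ∈ S, (s, a) ∈ F.R}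

def pref (F : AF) : Set (Set ℕ) :=
  {S | S ∈ F.adm ∧ ∀ T ∈ F.adm, S ⊆ T → S = T}

def stage (F : AF) : Set (Set ℕ) :=
  {S | S ∈ F.cf ∧ ¬ ∃ T ∈ F.cf, F.rng S ⊂ F.rng T}

def sem (F : AF) : Set (Set ℕ) :=
  {S | S ∈ F.adm ∧ ¬ ∃ T ∈ F.adm, F.rng S ⊂ F.rng T}

end AF

abbrev Semantics := AF → Set (Set ℕ)

def StandardSemantics : Set Semantics :=
  {AF.naive, AF.stb, AF.stage, AF.pref, AF.sem}

def AFCompact (σ : Semantics) (F : AF) : Prop :=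
  ∀ a ∈ F.A, ∃ S ∈ σ F, a ∈ S

def CAF (σ : Semantics) : Set AF := {F | AFCompact σ F}

def ArgS (𝕊 : Set (Set ℕ)) : Set ℕ := ⋃₀ 𝕊

def PairsS (𝕊 : Set (Set ℕ)) : Set (ℕ × ℕ) :=
  {p | ∃ S ∈ 𝕊, p.1 ∈ S ∧ p.2 ∈ S}

def IsExtensionSet (𝕊 : Set (Set ℕ)) : Prop := (ArgS 𝕊).Finite

def AFStep (F : AF) (a b : ℕ) : Prop := (a, b) ∈ F.R ∨ (b, a) ∈ F.R

def AFConnected (F : AF) : Prop :=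
  ∀ a ∈ F.A, ∀ b ∈ F.A, Relation.ReflTransGen (AFStep F) a b

def sameComp (F : AF) (a b : ℕ) : Prop := Relation.ReflTransGen (AFStep F) a b

def comps (F : AF) : Set (Set ℕ) :=
  {K | ∃ a ∈ F.A, K = {b ∈ (↑F.A : Set ℕ) | sameComp F a b}}

def nopairs (𝕊 : Set (Set ℕ)) (a b : ℕ) : Prop :=
  a ∈ ArgS 𝕊 ∧ b ∈ ArgS 𝕊 ∧ (a, b) ∉ PairsS 𝕊

def compsS (𝕊 : Set (Set ℕ)) : Set (Set ℕ) :=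
  {K | ∃ a ∈ ArgS 𝕊, K = {b ∈ ArgS 𝕊 | Relation.ReflTransGen (nopairs 𝕊) a b}}

noncomputable def sigmaMax (σ : Semantics) (n : ℕ) : ℕ :=
  sSup {k | ∃ F : AF, F.A.card = n ∧ (σ F).ncard = k}

noncomputable def sigmaMaxCon (σ : Semantics) (n : ℕ) : ℕ :=
  sSup {k | ∃ F : AF, F.A.card = n ∧ AFConnected F ∧ (σ F).ncard = k}

noncomputable def sigmaMax2 (σ : Semantics) (n : ℕ) : ℕ :=
  sSup ({k | ∃ F : AF, F.A.card = n ∧ (σ F).ncard = k} \ {sigmaMax σ n})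

def cfSet (𝕊 : Set (Set ℕ)) : Set (Set ℕ) :=
  {S | S ⊆ ArgS 𝕊 ∧ ∀ a ∈ S, ∀ b ∈ S, (a, b) ∈ PairsS 𝕊}

def plusSet (𝕊 : Set (Set ℕ)) : Set (Set ℕ) :=
  {S | S ∈ cfSet 𝕊 ∧ ∀ T ∈ cfSet 𝕊, S ⊆ T → S = T}

def minusSet (𝕊 : Set (Set ℕ)) : Set (Set ℕ) := plusSet 𝕊 \ 𝕊

def Sig (σ : Semantics) : Set (Set (Set ℕ)) := {𝕊 | ∃ F : AF, σ F = 𝕊}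

def cSig (σ : Semantics) : Set (Set (Set ℕ)) :=
  {𝕊 | ∃ F : AF, AFCompact σ F ∧ σ F = 𝕊}

def Pcon (σ : Semantics) (n : ℕ) : Set ℕ :=
  {k | ∃ F : AF, AFCompact σ F ∧ AFConnected F ∧ F.A.card = n ∧ (σ F).ncard = k}

open Classical in
noncomputable def restrictAF (F : AF) (K : Set ℕ) : AF where
  A := F.A.filter (fun a => a ∈ K)
  R := {p | p ∈ F.R ∧ p.1 ∈ K ∧ p.2 ∈ K}
  R_sub := fun p hp => by
    have h := F.R_sub p hp.1
    simp only [Finset.mem_filter]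
    exact ⟨⟨h.1, hp.2.1⟩, ⟨h.2, hp.2.2⟩⟩

def IsExclusionMapping (𝕊 : Set (Set ℕ)) (Rm : Set (ℕ × ℕ)) : Prop :=
  ∃ f : Set ℕ → ℕ,
    (∀ S ∈ minusSet 𝕊, f S ∈ ArgS 𝕊 ∧ f S ∉ S) ∧
    Rm = {p | ∃ S ∈ minusSet 𝕊, p.1 ∈ S ∧ p.2 = f S ∧ p ∉ PairsS 𝕊}

def Independent (𝕊 : Set (Set ℕ)) : Prop :=
  ∃ Rm : Set (ℕ × ℕ), IsExclusionMapping 𝕊 Rm ∧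
    (∀ a b, (a, b) ∈ Rm → (b, a) ∈ Rm → a = b) ∧
    ∀ S ∈ 𝕊, ∀ a ∈ ArgS 𝕊 \ S, ∃ s ∈ S, (s, a) ∉ Rm ∪ PairsS 𝕊

def ConflictExplicit (σ : Semantics) (F : AF) : Prop :=
  ∀ a ∈ F.A, ∀ b ∈ F.A, (a, b) ∉ PairsS (σ F) → (a, b) ∈ F.R ∨ (b, a) ∈ F.R

noncomputable def canonicalCF (𝕊 : Set (Set ℕ)) (h : IsExtensionSet 𝕊) : AF where
  A := h.toFinset
  R := {p | p.1 ∈ ArgS 𝕊 ∧ p.2 ∈ ArgS 𝕊 ∧ p ∉ PairsS 𝕊}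
  R_sub := fun p hp => by
    exact ⟨(Set.Finite.mem_toFinset (h : (ArgS 𝕊).Finite)).2 hp.1,
      (Set.Finite.mem_toFinset (h : (ArgS 𝕊).Finite)).2 hp.2.1⟩


def mm : ℕ → ℕ
  | 0 => 1
  | 1 => 1
  | 2 => 2
  | 3 => 3
  | 4 => 4
  | (n+5) => 3 * mm (n+2)

lemma mm_le_succ : ∀ n, mm n ≤ mm (n+1)
  | 0 => by simp [mm]
  | 1 => by simp [mm]
  | 2 => by simp [mm]
  | 3 => by simp [mm]
  | 4 => by simp [mm]
  | (n+5) => by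
      show 3 * mm (n+2) ≤ 3 * mm (n+3)
      exact Nat.mul_le_mul_left 3 (mm_le_succ (n+2))

lemma mm_mono : Monotone mm := monotone_nat_of_le_succ mm_le_succ

lemma mm_ineq1 : ∀ n, mm (n+3) + mm n ≤ mm (n+4)
  | 0 => by simp [mm]
  | 1 => by simp [mm]
  | 2 => by simp [mm]
  | 3 => by simp [mm]
  | 4 => by simp [mm]
  | (n+5) => by
      show mm (n+3+5) + 3 * mm (n+2) ≤ mm (n+4+5)
      show 3 * mm (n+3+2) + 3 * mm (n+2) ≤ 3 * mm (n+4+2)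
      rw [← Nat.mul_add]
      exact Nat.mul_le_mul_left 3 (mm_ineq1 (n+2))

lemma mm_ineq2 : ∀ n, 2 * mm n ≤ mm (n+2)
  | 0 => by simp [mm]
  | 1 => by simp [mm]
  | 2 => by simp [mm]
  | 3 => by simp [mm]
  | 4 => by simp [mm]
  | (n+5) => by
      show 2 * (3 * mm (n+2)) ≤ 3 * mm (n+2+2)
      calc 2 * (3 * mm (n+2)) = 3 * (2 * mm (n+2)) := by ring
        _ ≤ 3 * mm (n+2+2) := Nat.mul_le_mul_left 3 (mm_ineq2 (n+2))

lemma mm_rec (n : ℕ) : mm (n+5) = 3 * mm (n+2) := rfl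

lemma mm_ineq4 : ∀ n, 3 * mm n ≤ mm (n+3)
  | 0 => by simp [mm]
  | 1 => by simp [mm]
  | (n+2) => le_of_eq (mm_rec n).symm

lemma mm_three_mul : ∀ s, 1 ≤ s → mm (3*s) = 3^s := by
  intro s hs
  induction s with
  | zero => omega
  | succ t ih =>
    rcases Nat.eq_or_lt_of_le hs with h | h
    · simp [← h]; rfl
    · have ht : 1 ≤ t := by omega
      have : 3 * (t+1) = (3*t - 2) + 5 := by omega
      rw [this, mm_rec]
      have : 3*t - 2 + 2 = 3*t := by omega
      rw [this, ih ht, pow_succ]; ring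

lemma mm_three_mul_add_one : ∀ s, 1 ≤ s → mm (3*s+1) = 4 * 3^(s-1) := by
  intro s hs
  induction s with
  | zero => omega
  | succ t ih =>
    rcases Nat.eq_or_lt_of_le hs with h | h
    · simp [← h]; rfl
    · have ht : 1 ≤ t := by omega
      have : 3 * (t+1) + 1 = (3*t - 1) + 5 := by omega
      rw [this, mm_rec]
      have : 3*t - 1 + 2 = 3*t + 1 := by omega
      rw [this, ih ht]
      have : t + 1 - 1 = (t - 1) + 1 := by omega
      rw [this, pow_succ]; ring

lemma mm_three_mul_add_two : ∀ s, mm (3*s+2) = 2 * 3^s := by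
  intro s
  induction s with
  | zero => rfl
  | succ t ih =>
    have : 3 * (t+1) + 2 = 3*t + 5 := by omega
    rw [this, mm_rec, ih, pow_succ]; ring


-- PART B basics: cf, naive, injections
open Classical in
noncomputable def AF.del (F : AF) (X : Finset ℕ) : AF := restrictAF F {a | a ∉ X}

open Classical in
noncomputable def AF.nb (F : AF) (v : ℕ) : Finset ℕ :=
  F.A.filter (fun b => b = v ∨ (v,b) ∈ F.R ∨ (b,v) ∈ F.R)

namespace AF
variable {F : AF} {S T : Set ℕ} {v w x : ℕ}

lemma mem_nb {b : ℕ} : b ∈ F.nb v ↔ b ∈ F.A ∧ (b = v ∨ (v,b) ∈ F.R ∨ (b,v) ∈ F.R) := by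
  classical
  simp [AF.nb]

lemma nb_subset : F.nb v ⊆ F.A := fun b hb => (mem_nb.1 hb).1

lemma self_mem_nb (hv : v ∈ F.A) : v ∈ F.nb v := mem_nb.2 ⟨hv, Or.inl rfl⟩

lemma mem_nb_symm (hv : v ∈ F.A) (h : w ∈ F.nb v) : v ∈ F.nb w := by
  rcases mem_nb.1 h with ⟨hw, h1 | h2 | h3⟩
  · exact mem_nb.2 ⟨hv, Or.inl h1.symm⟩
  · exact mem_nb.2 ⟨hv, Or.inr (Or.inr h2)⟩
  · exact mem_nb.2 ⟨hv, Or.inr (Or.inl h3)⟩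

lemma del_A (X : Finset ℕ) : (F.del X).A = F.A \ X := by
  classical
  ext a; simp [AF.del, restrictAF]

lemma del_card {X : Finset ℕ} (hX : X ⊆ F.A) : (F.del X).A.card = F.A.card - X.card := by
  rw [del_A, Finset.card_sdiff_of_subset hX]

lemma del_R {X : Finset ℕ} {p : ℕ × ℕ} :
    p ∈ (F.del X).R ↔ p ∈ F.R ∧ p.1 ∉ X ∧ p.2 ∉ X := by
  simp [AF.del, restrictAF]; tauto

lemma cf_del_iff {X : Finset ℕ} :
    S ∈ (F.del X).cf ↔ S ∈ F.cf ∧ ∀ a ∈ S, a ∉ X := by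
  constructor
  · rintro ⟨hsub, hcf⟩
    have hdis : ∀ a ∈ S, a ∉ X := by
      intro a ha hax
      have := hsub ha
      rw [del_A] at this
      simp at this; exact this.2 hax
    refine ⟨⟨fun a ha => ?_, fun a ha b hb hab => ?_⟩, hdis⟩
    · have := hsub ha; rw [del_A] at this; simp at this; exact this.1
    · exact hcf a ha b hb (del_R.2 ⟨hab, hdis a ha, hdis b hb⟩)
  · rintro ⟨⟨hsub, hcf⟩, hdis⟩
    refine ⟨fun a ha => ?_, fun a ha b hb hab => hcf a ha b hb (del_R.1 hab).1⟩
    rw [del_A]; simp; exact ⟨hsub ha, hdis a ha⟩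

lemma cf_mono (h : T ⊆ S) (hS : S ∈ F.cf) : T ∈ F.cf :=
  ⟨h.trans hS.1, fun a ha b hb => hS.2 a (h ha) b (h hb)⟩

lemma cf_finite (F : AF) : F.cf.Finite :=
  (Set.Finite.finite_subsets F.A.finite_toSet).subset (fun _ hS => hS.1)

lemma naive_finite (F : AF) : F.naive.Finite := F.cf_finite.subset (fun _ hS => hS.1)

end AF

namespace AF
variable {F : AF} {S T : Set ℕ} {v w x : ℕ}

lemma exists_naive_superset (hS : S ∈ F.cf) : ∃ T ∈ F.naive, S ⊆ T := by
  have hfin : {T | T ∈ F.cf ∧ S ⊆ T}.Finite := F.cf_finite.subset (fun _ h => h.1)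
  obtain ⟨T, hT, hmax⟩ := Set.Finite.exists_maximalFor id _ hfin ⟨S, hS, subset_rfl⟩
  refine ⟨T, ⟨hT.1, fun U hU hTU => ?_⟩, hT.2⟩
  exact Set.Subset.antisymm hTU (hmax ⟨hU, hT.2.trans hTU⟩ hTU)

/-- naive sets containing v inject into naive sets of F minus closed nbhd of v -/
lemma ncard_mem_le (hv : v ∈ F.A) (hloop : (v,v) ∉ F.R) :
    {S | S ∈ F.naive ∧ v ∈ S}.ncard ≤ (F.del (F.nb v)).naive.ncard := by
  refine Set.ncard_le_ncard_of_injOn (fun S => S \ {v}) ?_ ?_ ((F.del (F.nb v)).naive_finite)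
  · rintro S ⟨⟨hcf, hmax⟩, hvS⟩
    have hdis : ∀ a ∈ S, a ≠ v → a ∉ F.nb v := by
      intro a ha hav hanb
      rcases mem_nb.1 hanb with ⟨_, h1 | h2 | h3⟩
      · exact hav h1
      · exact hcf.2 v hvS a ha h2
      · exact hcf.2 a ha v hvS h3
    constructor
    · rw [cf_del_iff]
      refine ⟨cf_mono Set.diff_subset hcf, ?_⟩
      rintro a ⟨ha, hav⟩
      exact hdis a ha (by simpa using hav)
    · intro T hT hsub
      rw [cf_del_iff] at hT
      have hTv : T ∪ {v} ∈ F.cf := by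
        refine ⟨?_, ?_⟩
        · rintro a (ha | ha)
          · exact hT.1.1 ha
          · simp at ha; subst ha; exact hv
        · rintro a (ha | ha) b (hb | hb) hab
          · exact hT.1.2 a ha b hb hab
          · simp at hb; subst hb
            exact hT.2 a ha (mem_nb.2 ⟨(F.R_sub _ hab).1, Or.inr (Or.inr hab)⟩)
          · simp at ha; subst ha
            exact hT.2 b hb (mem_nb.2 ⟨(F.R_sub _ hab).2, Or.inr (Or.inl hab)⟩)
          · simp at ha hb; subst ha; subst hb; exact hloop hab
      have hSsub : S ⊆ T ∪ {v} := by
        intro a ha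
        by_cases hav : a = v
        · right; simp [hav]
        · left; exact hsub ⟨ha, by simpa using hav⟩
      have := hmax _ hTv hSsub
      show S \ {v} = T
      ext a; constructor
      · rintro ⟨ha, hav⟩; exact hsub ⟨ha, hav⟩
      · rintro ha
        have hanv : a ≠ v := by
          rintro rfl
          exact hT.2 _ ha (self_mem_nb hv)
        refine ⟨?_, by simpa using hanv⟩
        rw [this]; left; exact ha
  · rintro S1 ⟨_, hv1⟩ S2 ⟨_, hv2⟩ h
    simp only at h
    calc S1 = S1 \ {v} ∪ {v} := by ext a; by_cases hav : a = v <;> simp [hav, hv1]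
      _ = S2 \ {v} ∪ {v} := by rw [h]
      _ = S2 := by ext a; by_cases hav : a = v <;> simp [hav, hv2]

lemma ncard_notmem_le (v : ℕ) :
    {S | S ∈ F.naive ∧ v ∉ S}.ncard ≤ (F.del {v}).naive.ncard := by
  refine Set.ncard_le_ncard_of_injOn id ?_ (fun a _ b _ h => h) ((F.del {v}).naive_finite)
  · rintro S ⟨⟨hcf, hmax⟩, hvS⟩
    constructor
    · rw [cf_del_iff]
      refine ⟨hcf, fun a ha hax => hvS ?_⟩
      simp at hax; rwa [hax] at ha
    · intro T hT hsub
      rw [cf_del_iff] at hT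
      exact hmax T hT.1 hsub

/-- every maximal cf set meets the closed neighbourhood of a non-self-attacking argument -/
lemma naive_meets_nb (hv : v ∈ F.A) (hloop : (v,v) ∉ F.R) (hS : S ∈ F.naive) :
    ∃ w ∈ F.nb v, w ∈ S := by
  by_contra h
  push_neg at h
  have hcf : S ∪ {v} ∈ F.cf := by
    refine ⟨?_, ?_⟩
    · rintro a (ha | ha)
      · exact hS.1.1 ha
      · simp at ha; subst ha; exact hv
    · rintro a (ha | ha) b (hb | hb) hab
      · exact hS.1.2 a ha b hb hab
      · simp at hb; subst hb
        exact h a (mem_nb.2 ⟨(F.R_sub _ hab).1, Or.inr (Or.inr hab)⟩) ha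
      · simp at ha; subst ha
        exact h b (mem_nb.2 ⟨(F.R_sub _ hab).2, Or.inr (Or.inl hab)⟩) hb
      · simp at ha hb; subst ha; subst hb; exact hloop hab
  have := hS.2 _ hcf Set.subset_union_left
  have hvS : v ∈ S := by rw [this]; right; rfl
  exact h v (self_mem_nb hv) hvS

end AF

namespace AF

lemma naive_bound : ∀ (n : ℕ) (F : AF), F.A.card = n → F.naive.ncard ≤ mm n := by
  intro n
  induction n using Nat.strong_induction_on with
  | _ n ih =>
  intro F hcard
  rcases Nat.eq_zero_or_pos n with hn | hn
  · subst hn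
    have hsub : F.naive ⊆ {∅} := by
      intro S hS
      have h1 : S ⊆ (↑F.A : Set ℕ) := hS.1.1
      rw [Finset.card_eq_zero] at hcard
      rw [hcard] at h1
      simpa [Set.subset_empty_iff] using h1
    calc F.naive.ncard ≤ ({∅} : Set (Set ℕ)).ncard :=
          Set.ncard_le_ncard hsub (Set.finite_singleton _)
      _ = 1 := Set.ncard_singleton _
  have key : ∀ X : Finset ℕ, X ⊆ F.A → X.Nonempty → (F.del X).naive.ncard ≤ mm (n - X.card) := by
    intro X hXA hXne
    have h1 : X.card ≤ n := hcard ▸ Finset.card_le_card hXA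
    have h2 : 0 < X.card := Finset.card_pos.2 hXne
    exact ih (n - X.card) (by omega) _ (by rw [del_card hXA, hcard])
  have memfin : ∀ v : ℕ, {S | S ∈ F.naive ∧ v ∈ S}.Finite :=
    fun v => F.naive_finite.subset (fun _ h => h.1)
  have notmemfin : ∀ v : ℕ, {S | S ∈ F.naive ∧ v ∉ S}.Finite :=
    fun v => F.naive_finite.subset (fun _ h => h.1)
  by_cases hsl : ∃ v ∈ F.A, (v,v) ∈ F.R
  · -- a self-attacking argument: delete it
    obtain ⟨v, hv, hloop⟩ := hsl
    have h1 : F.naive ⊆ {S | S ∈ F.naive ∧ v ∉ S} := by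
      intro S hS
      exact ⟨hS, fun hvS => hS.1.2 v hvS v hvS hloop⟩
    have hv1 : ({v} : Finset ℕ) ⊆ F.A := by simpa using hv
    calc F.naive.ncard ≤ {S | S ∈ F.naive ∧ v ∉ S}.ncard :=
          Set.ncard_le_ncard h1 (notmemfin v)
      _ ≤ (F.del {v}).naive.ncard := ncard_notmem_le v
      _ ≤ mm (n - 1) := by simpa using key {v} hv1 ⟨v, by simp⟩
      _ ≤ mm n := mm_mono (by omega)
  push_neg at hsl
  have hnbA : ∀ v ∈ F.A, (F.nb v).card ≤ n := by
    intro v _; exact hcard ▸ Finset.card_le_card nb_subset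
  have hkeynb : ∀ v ∈ F.A, {S | S ∈ F.naive ∧ v ∈ S}.ncard ≤ mm (n - (F.nb v).card) := by
    intro v hv
    exact (ncard_mem_le hv (hsl v hv)).trans (key _ nb_subset ⟨v, self_mem_nb hv⟩)
  by_cases hbig : ∃ v ∈ F.A, 4 ≤ (F.nb v).card
  · obtain ⟨v, hv, h4⟩ := hbig
    have hcover : F.naive ⊆ {S | S ∈ F.naive ∧ v ∈ S} ∪ {S | S ∈ F.naive ∧ v ∉ S} := by
      intro S hS
      by_cases h : v ∈ S
      · exact Or.inl ⟨hS, h⟩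
      · exact Or.inr ⟨hS, h⟩
    have hn4 : 4 ≤ n := le_trans h4 (hnbA v hv)
    obtain ⟨m, rfl⟩ : ∃ m, n = m + 4 := ⟨n - 4, by omega⟩
    have hv1 : ({v} : Finset ℕ) ⊆ F.A := by simpa using hv
    calc F.naive.ncard
        ≤ ({S | S ∈ F.naive ∧ v ∈ S} ∪ {S | S ∈ F.naive ∧ v ∉ S}).ncard :=
          Set.ncard_le_ncard hcover ((memfin v).union (notmemfin v))
      _ ≤ {S | S ∈ F.naive ∧ v ∈ S}.ncard + {S | S ∈ F.naive ∧ v ∉ S}.ncard :=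
          Set.ncard_union_le _ _
      _ ≤ mm (m + 4 - (F.nb v).card) + mm (m + 3) := by
          have h1 := hkeynb v hv
          have h2 := (ncard_notmem_le v).trans (key {v} hv1 ⟨v, by simp⟩)
          have h3 : m + 4 - ({v} : Finset ℕ).card = m + 3 := by simp
          rw [h3] at h2
          omega
      _ ≤ mm m + mm (m + 3) := by
          have := mm_mono (show m + 4 - (F.nb v).card ≤ m by omega)
          omega
      _ ≤ mm (m + 4) := by have := mm_ineq1 m; omega
  push_neg at hbig
  by_cases h2 : ∃ v ∈ F.A, (F.nb v).card ≤ 2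
  · obtain ⟨v, hv, hc2⟩ := h2
    have hc1 : 1 ≤ (F.nb v).card := Finset.card_pos.2 ⟨v, self_mem_nb hv⟩
    rcases (by omega : (F.nb v).card = 1 ∨ (F.nb v).card = 2) with hcv | hcv
    · -- card 1 : nb v = {v}
      obtain ⟨a, ha⟩ := Finset.card_eq_one.1 hcv
      have hva : v = a := by
        have := self_mem_nb hv; rw [ha] at this; simpa using this
      subst hva
      have hcover : F.naive ⊆ {S | S ∈ F.naive ∧ v ∈ S} := by
        intro S hS
        obtain ⟨w, hw, hwS⟩ := naive_meets_nb hv (hsl v hv) hS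
        rw [ha] at hw; simp at hw; subst hw
        exact ⟨hS, hwS⟩
      calc F.naive.ncard ≤ {S | S ∈ F.naive ∧ v ∈ S}.ncard :=
            Set.ncard_le_ncard hcover (memfin v)
        _ ≤ mm (n - 1) := by have := hkeynb v hv; rwa [hcv] at this
        _ ≤ mm n := mm_mono (by omega)
    · -- card 2 : nb v = {v, x}
      obtain ⟨a, b, hab, hnb⟩ := Finset.card_eq_two.1 hcv
      have hvmem := self_mem_nb hv
      rw [hnb] at hvmem
      simp at hvmem
      -- wlog v = a; let x be the other element
      obtain ⟨x, hxv, hnbx⟩ : ∃ x, x ≠ v ∧ F.nb v = {v, x} := by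
        rcases hvmem with rfl | rfl
        · exact ⟨b, fun h => hab h.symm, hnb⟩
        · exact ⟨a, hab, by rw [hnb]; ext y; simp; tauto⟩
      have hxnb : x ∈ F.nb v := by rw [hnbx]; simp
      have hxA : x ∈ F.A := nb_subset hxnb
      have hx2 : 2 ≤ (F.nb x).card := by
        have hsub : ({x, v} : Finset ℕ) ⊆ F.nb x := by
          intro y hy; simp at hy
          rcases hy with rfl | rfl
          · exact self_mem_nb hxA
          · exact mem_nb_symm hv hxnb
        calc 2 = ({x, v} : Finset ℕ).card := (Finset.card_pair hxv).symm
          _ ≤ (F.nb x).card := Finset.card_le_card hsub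
      have hn2 : 2 ≤ n := le_trans (hcv ▸ le_refl _) (hcv ▸ hnbA v hv)
      obtain ⟨m, rfl⟩ : ∃ m, n = m + 2 := ⟨n - 2, by omega⟩
      have hcover : F.naive ⊆ {S | S ∈ F.naive ∧ v ∈ S} ∪ {S | S ∈ F.naive ∧ x ∈ S} := by
        intro S hS
        obtain ⟨w, hw, hwS⟩ := naive_meets_nb hv (hsl v hv) hS
        rw [hnbx] at hw; simp at hw
        rcases hw with rfl | rfl
        · exact Or.inl ⟨hS, hwS⟩
        · exact Or.inr ⟨hS, hwS⟩
      calc F.naive.ncard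
          ≤ ({S | S ∈ F.naive ∧ v ∈ S} ∪ {S | S ∈ F.naive ∧ x ∈ S}).ncard :=
            Set.ncard_le_ncard hcover ((memfin v).union (memfin x))
        _ ≤ {S | S ∈ F.naive ∧ v ∈ S}.ncard + {S | S ∈ F.naive ∧ x ∈ S}.ncard :=
            Set.ncard_union_le _ _
        _ ≤ mm m + mm m := by
            have h1 := hkeynb v hv
            rw [hcv] at h1
            have h1' : m + 2 - 2 = m := by omega
            rw [h1'] at h1
            have hx1 := hkeynb x hxA
            have := mm_mono (show m + 2 - (F.nb x).card ≤ m by omega)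
            omega
        _ ≤ mm (m + 2) := by have := mm_ineq2 m; omega
  · push_neg at h2
    have hall3 : ∀ v ∈ F.A, (F.nb v).card = 3 := by
      intro v hv
      have := hbig v hv; have := h2 v hv; omega
    obtain ⟨v, hv⟩ := Finset.card_pos.1 (hcard ▸ hn)
    obtain ⟨a, b, c, hab, hac, hbc, hnb⟩ := Finset.card_eq_three.1 (hall3 v hv)
    have hmem : ∀ y ∈ F.nb v, y ∈ F.A := fun y hy => nb_subset hy
    have haA : a ∈ F.A := hmem a (by rw [hnb]; simp)
    have hbA : b ∈ F.A := hmem b (by rw [hnb]; simp)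
    have hcA : c ∈ F.A := hmem c (by rw [hnb]; simp)
    have hn3 : 3 ≤ n := by
      have := hnbA v hv; rw [hall3 v hv] at this; omega
    obtain ⟨m, rfl⟩ : ∃ m, n = m + 3 := ⟨n - 3, by omega⟩
    have hcover : F.naive ⊆ {S | S ∈ F.naive ∧ a ∈ S} ∪
        ({S | S ∈ F.naive ∧ b ∈ S} ∪ {S | S ∈ F.naive ∧ c ∈ S}) := by
      intro S hS
      obtain ⟨w, hw, hwS⟩ := naive_meets_nb hv (hsl v hv) hS
      rw [hnb] at hw; simp at hw
      rcases hw with rfl | rfl | rfl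
      · exact Or.inl ⟨hS, hwS⟩
      · exact Or.inr (Or.inl ⟨hS, hwS⟩)
      · exact Or.inr (Or.inr ⟨hS, hwS⟩)
    have hkey3 : ∀ y, y ∈ F.A → {S | S ∈ F.naive ∧ y ∈ S}.ncard ≤ mm m := by
      intro y hy
      have := hkeynb y hy
      rw [hall3 y hy] at this
      simpa using this
    calc F.naive.ncard
        ≤ ({S | S ∈ F.naive ∧ a ∈ S} ∪
            ({S | S ∈ F.naive ∧ b ∈ S} ∪ {S | S ∈ F.naive ∧ c ∈ S})).ncard :=
          Set.ncard_le_ncard hcover ((memfin a).union ((memfin b).union (memfin c)))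
      _ ≤ {S | S ∈ F.naive ∧ a ∈ S}.ncard +
            ({S | S ∈ F.naive ∧ b ∈ S} ∪ {S | S ∈ F.naive ∧ c ∈ S}).ncard :=
          Set.ncard_union_le _ _
      _ ≤ {S | S ∈ F.naive ∧ a ∈ S}.ncard +
            ({S | S ∈ F.naive ∧ b ∈ S}.ncard + {S | S ∈ F.naive ∧ c ∈ S}.ncard) := by
          have := Set.ncard_union_le {S | S ∈ F.naive ∧ b ∈ S} {S | S ∈ F.naive ∧ c ∈ S}
          omega
      _ ≤ 3 * mm m := by
          have := hkey3 a haA; have := hkey3 b hbA; have := hkey3 c hcA; omega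
      _ ≤ mm (m + 3) := mm_ineq4 m

end AF

namespace AF
variable {F : AF} {S T : Set ℕ}

lemma rng_mono (h : S ⊆ T) : F.rng S ⊆ F.rng T := by
  rintro a (ha | ⟨s, hs, hr⟩)
  · exact Or.inl (h ha)
  · exact Or.inr ⟨s, h hs, hr⟩

lemma adm_union (hS : S ∈ F.adm) (hT : T ∈ F.adm) (hcf : S ∪ T ∈ F.cf) :
    S ∪ T ∈ F.adm := by
  refine ⟨hcf, ?_⟩
  rintro a (ha | ha) b hb
  · obtain ⟨s, hs, hr⟩ := hS.2 a ha b hb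
    exact ⟨s, Or.inl hs, hr⟩
  · obtain ⟨s, hs, hr⟩ := hT.2 a ha b hb
    exact ⟨s, Or.inr hs, hr⟩

/-- if S, T are cf with cf union, and an element of T is outside S, the range grows strictly -/
lemma rng_ssubset (hST : S ∪ T ∈ F.cf) {a : ℕ} (haT : a ∈ T) (haS : a ∉ S) :
    F.rng S ⊂ F.rng (S ∪ T) := by
  refine ⟨rng_mono Set.subset_union_left, fun hsub => ?_⟩
  have ha : a ∈ F.rng (S ∪ T) := Or.inl (Or.inr haT)
  have := hsub ha
  rcases this with h | ⟨s, hs, hr⟩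
  · exact haS h
  · exact hST.2 s (Or.inl hs) a (Or.inr haT) hr

/-- a family of cf sets, any two compatible members of which are equal, injects into naive -/
lemma ncard_le_naive {𝒮 : Set (Set ℕ)} (h1 : 𝒮 ⊆ F.cf)
    (h2 : ∀ S ∈ 𝒮, ∀ T ∈ 𝒮, S ∪ T ∈ F.cf → S = T) :
    𝒮.ncard ≤ F.naive.ncard := by
  classical
  have hmap : ∀ S ∈ 𝒮, ∃ T ∈ F.naive, S ⊆ T := fun S hS => exists_naive_superset (h1 hS)
  choose! f hf1 hf2 using hmap
  refine Set.ncard_le_ncard_of_injOn f (fun S hS => hf1 S hS) ?_ F.naive_finite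
  intro S1 hS1 S2 hS2 heq
  apply h2 S1 hS1 S2 hS2
  apply cf_mono _ (hf1 S1 hS1).1
  rw [Set.union_subset_iff]
  exact ⟨hf2 S1 hS1, heq ▸ hf2 S2 hS2⟩

lemma exists_witness (hne : S ≠ T) : (∃ a, a ∈ S ∧ a ∉ T) ∨ (∃ a, a ∈ T ∧ a ∉ S) := by
  by_contra h
  push_neg at h
  exact hne (Set.Subset.antisymm h.1 h.2)

lemma stb_ncard_le : F.stb.ncard ≤ F.naive.ncard := by
  refine ncard_le_naive (fun S hS => hS.1) ?_
  intro S hS T hT hcf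
  by_contra hne
  rcases exists_witness hne with ⟨a, haS, haT⟩ | ⟨a, haT, haS⟩
  · obtain ⟨s, hs, hr⟩ := hT.2 a (hS.1.1 haS) haT
    exact hcf.2 s (Or.inr hs) a (Or.inl haS) hr
  · obtain ⟨s, hs, hr⟩ := hS.2 a (hT.1.1 haT) haS
    exact hcf.2 s (Or.inl hs) a (Or.inr haT) hr

lemma naive_ncard_le : F.naive.ncard ≤ F.naive.ncard := le_refl _

lemma pref_ncard_le : F.pref.ncard ≤ F.naive.ncard := by
  refine ncard_le_naive (fun S hS => hS.1.1) ?_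
  intro S hS T hT hcf
  have hadm := adm_union hS.1 hT.1 hcf
  have h1 := hS.2 _ hadm Set.subset_union_left
  have h2 := hT.2 _ hadm Set.subset_union_right
  exact h1.trans h2.symm

lemma stage_ncard_le : F.stage.ncard ≤ F.naive.ncard := by
  refine ncard_le_naive (fun S hS => hS.1) ?_
  intro S hS T hT hcf
  by_contra hne
  rcases exists_witness hne with ⟨a, haS, haT⟩ | ⟨a, haT, haS⟩
  · exact hT.2 ⟨T ∪ S, by rwa [Set.union_comm] at hcf,
      rng_ssubset (by rwa [Set.union_comm] at hcf) haS haT⟩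
  · exact hS.2 ⟨S ∪ T, hcf, rng_ssubset hcf haT haS⟩

lemma sem_ncard_le : F.sem.ncard ≤ F.naive.ncard := by
  refine ncard_le_naive (fun S hS => hS.1.1) ?_
  intro S hS T hT hcf
  by_contra hne
  rcases exists_witness hne with ⟨a, haS, haT⟩ | ⟨a, haT, haS⟩
  · exact hT.2 ⟨T ∪ S, adm_union hT.1 hS.1 (by rwa [Set.union_comm] at hcf),
      rng_ssubset (by rwa [Set.union_comm] at hcf) haS haT⟩
  · exact hS.2 ⟨S ∪ T, adm_union hS.1 hT.1 hcf, rng_ssubset hcf haT haS⟩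

theorem upper_bound (σ : Semantics) (hσ : σ ∈ StandardSemantics) (F : AF) :
    (σ F).ncard ≤ mm F.A.card := by
  have hnaive := naive_bound F.A.card F rfl
  rcases hσ with h | h | h | h | h <;> subst h
  · exact hnaive
  · exact stb_ncard_le.trans hnaive
  · exact stage_ncard_le.trans hnaive
  · exact pref_ncard_le.trans hnaive
  · exact sem_ncard_le.trans hnaive

end AF

namespace AF

lemma stb_subset_naive (F : AF) : F.stb ⊆ F.naive := by
  rintro S ⟨hcf, hstb⟩
  refine ⟨hcf, fun T hT hST => Set.Subset.antisymm hST (fun a haT => ?_)⟩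
  by_contra haS
  obtain ⟨s, hs, hr⟩ := hstb a (hT.1 haT) haS
  exact hT.2 s (hST hs) a haT hr

lemma stage_subset_naive (F : AF) : F.stage ⊆ F.naive := by
  rintro S ⟨hcf, hstage⟩
  refine ⟨hcf, fun T hT hST => Set.Subset.antisymm hST (fun a haT => ?_)⟩
  by_contra haS
  have hUcf : S ∪ T ∈ F.cf := by rwa [Set.union_eq_self_of_subset_left hST]
  have h := rng_ssubset hUcf haT haS
  rw [Set.union_eq_self_of_subset_left hST] at h
  exact hstage ⟨T, hT, h⟩

lemma rng_subset_A {F : AF} {T : Set ℕ} (hT : T ∈ F.cf) : F.rng T ⊆ ↑F.A := by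
  rintro a (ha | ⟨s, _, hr⟩)
  · exact hT.1 ha
  · exact (F.R_sub _ hr).2

lemma stb_rng {F : AF} {S : Set ℕ} (hS : S ∈ F.stb) : ↑F.A ⊆ F.rng S := by
  intro a ha
  by_cases haS : a ∈ S
  · exact Or.inl haS
  · obtain ⟨s, hs, hr⟩ := hS.2 a ha haS
    exact Or.inr ⟨s, hs, hr⟩

lemma stb_subset_stage (F : AF) : F.stb ⊆ F.stage := by
  rintro S hS
  refine ⟨hS.1, ?_⟩
  rintro ⟨T, hT, hsub⟩
  exact hsub.2 ((rng_subset_A hT).trans ((stb_rng hS).trans (rng_mono (le_refl _))))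

end AF

section grp

def grpAF (n : ℕ) {ι : Type} (G : ι → Finset ℕ) (hsub : ∀ i, G i ⊆ Finset.range n) : AF where
  A := Finset.range n
  R := {p | p.1 ≠ p.2 ∧ ∃ i, p.1 ∈ G i ∧ p.2 ∈ G i}
  R_sub := fun p hp => ⟨hsub hp.2.choose hp.2.choose_spec.1, hsub hp.2.choose hp.2.choose_spec.2⟩

variable {ι : Type} (n : ℕ) (G : ι → Finset ℕ)

/-- the transversal associated to a choice function -/
def tv (c : ∀ i, {x // x ∈ G i}) : Set ℕ := {a | ∃ i, (c i : ℕ) = a}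

variable (hsub : ∀ i, G i ⊆ Finset.range n)
  (hD : ∀ i j a, a ∈ G i → a ∈ G j → i = j)
  (hcov : ∀ a, a < n → ∃ i, a ∈ G i)
  (hNE : ∀ i, (G i).Nonempty)

lemma grp_R_symm {a b : ℕ} (h : (a, b) ∈ (grpAF n G hsub).R) : (b, a) ∈ (grpAF n G hsub).R := by
  obtain ⟨hne, i, h1, h2⟩ := h
  exact ⟨fun hh => hne hh.symm, i, h2, h1⟩

lemma grp_adm_eq_cf : (grpAF n G hsub).adm = (grpAF n G hsub).cf := by
  ext S
  refine ⟨fun h => h.1, fun h => ⟨h, ?_⟩⟩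
  intro a ha b hb
  exact ⟨a, ha, grp_R_symm n G hsub hb⟩

include hD hcov in
lemma grp_tv_mem_stb (c : ∀ i, {x // x ∈ G i}) : tv G c ∈ (grpAF n G hsub).stb := by
  constructor
  · constructor
    · rintro a ⟨i, hi⟩
      have := hsub i (c i).2
      simp only [grpAF, Finset.coe_range]
      rw [← hi]
      simpa using this
    · rintro a ⟨i, hi⟩ b ⟨j, hj⟩ ⟨hne, k, hak, hbk⟩
      have hik : i = k := hD i k a (hi ▸ (c i).2) hak
      have hjk : j = k := hD j k b (hj ▸ (c j).2) hbk
      apply hne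
      rw [← hi, ← hj, hik, hjk]
  · intro a ha hna
    simp only [grpAF, Finset.mem_range] at ha
    obtain ⟨i, hi⟩ := hcov a ha
    refine ⟨(c i : ℕ), ⟨i, rfl⟩, ?_, i, (c i).2, hi⟩
    intro h
    exact hna ⟨i, h⟩

include hD hNE hcov in
lemma grp_naive_subset_range : (grpAF n G hsub).naive ⊆ Set.range (tv G) := by
  intro S hS
  have huniq : ∀ i, ∀ a ∈ S, ∀ b ∈ S, a ∈ G i → b ∈ G i → a = b := by
    intro i a ha b hb hai hbi
    by_contra hne
    exact hS.1.2 a ha b hb ⟨hne, i, hai, hbi⟩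
  have hex : ∀ i, ∃ a, a ∈ S ∧ a ∈ G i := by
    intro i
    by_contra h
    push_neg at h
    obtain ⟨x, hx⟩ := hNE i
    have hxS : x ∉ S := fun hxS => h x hxS hx
    have hcf : S ∪ {x} ∈ (grpAF n G hsub).cf := by
      constructor
      · rintro a (ha | ha)
        · exact hS.1.1 ha
        · simp at ha; subst ha
          have := hsub i hx
          simp only [grpAF, Finset.coe_range]
          simpa using this
      · rintro a (ha | ha) b (hb | hb) ⟨hne, k, hak, hbk⟩
        · exact hS.1.2 a ha b hb ⟨hne, k, hak, hbk⟩
        · simp only [Set.mem_singleton_iff] at hb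
          have hki : k = i := hD k i x (hb ▸ hbk) hx
          exact h a ha (hki ▸ hak)
        · simp only [Set.mem_singleton_iff] at ha
          have hki : k = i := hD k i x (ha ▸ hak) hx
          exact h b hb (hki ▸ hbk)
        · simp only [Set.mem_singleton_iff] at ha hb
          exact hne (by rw [ha, hb])
    have := hS.2 _ hcf Set.subset_union_left
    have hxS' : x ∈ S := by rw [this]; right; rfl
    exact hxS hxS'
  choose g hg1 hg2 using hex
  refine ⟨fun i => ⟨g i, hg2 i⟩, ?_⟩
  ext a
  constructor
  · rintro ⟨i, hi⟩
    simp only at hi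
    exact hi ▸ hg1 i
  · intro ha
    have han : a < n := by
      have := hS.1.1 ha
      simp only [grpAF, Finset.coe_range] at this
      simpa using this
    obtain ⟨i, hi⟩ := hcov a han
    exact ⟨i, (huniq i (g i) (hg1 i) a ha (hg2 i) hi)⟩

include hD hNE hcov in
theorem grp_sigma (σ : Semantics) (hσ : σ ∈ StandardSemantics) :
    σ (grpAF n G hsub) = Set.range (tv G) := by
  set F := grpAF n G hsub with hF
  have h1 : Set.range (tv G) ⊆ F.stb := by
    rintro _ ⟨c, rfl⟩
    exact grp_tv_mem_stb n G hsub hD hcov c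
  have h2 : F.naive ⊆ Set.range (tv G) := grp_naive_subset_range n G hsub hD hcov hNE
  have hstb : F.stb = Set.range (tv G) :=
    Set.Subset.antisymm ((F.stb_subset_naive).trans h2) h1
  have hnaive : F.naive = Set.range (tv G) :=
    Set.Subset.antisymm h2 (h1.trans F.stb_subset_naive)
  have hstage : F.stage = Set.range (tv G) :=
    Set.Subset.antisymm ((F.stage_subset_naive).trans h2) (h1.trans F.stb_subset_stage)
  have hpref : F.pref = F.naive := by
    unfold AF.pref AF.naive
    rw [grp_adm_eq_cf]
  have hsem : F.sem = F.stage := by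
    unfold AF.sem AF.stage
    rw [grp_adm_eq_cf]
  rcases hσ with h | h | h | h | h <;> subst h
  · exact hnaive
  · exact hstb
  · exact hstage
  · exact hpref.trans hnaive
  · exact hsem.trans hstage

include hD in
lemma tv_injective : Function.Injective (tv G) := by
  intro c c' h
  funext i
  have h1 : (c i : ℕ) ∈ tv G c' := h ▸ ⟨i, rfl⟩
  obtain ⟨j, hj⟩ := h1
  have : j = i := hD j i _ (hj ▸ (c' j).2) (c i).2
  exact Subtype.ext (by rw [← hj, this])

include hD in
lemma range_tv_ncard [Fintype ι] [DecidableEq ι] :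
    (Set.range (tv G)).ncard = ∏ i, (G i).card := by
  rw [← Set.image_univ, Set.ncard_image_of_injective _ (tv_injective G hD), Set.ncard_univ]
  rw [Nat.card_pi]
  congr 1
  funext i
  simp [Nat.card_eq_fintype_card]

end grp

section lower

def tpG (t p : ℕ) : (Fin t ⊕ Fin p) → Finset ℕ :=
  Sum.elim (fun i => {3*(i:ℕ), 3*(i:ℕ)+1, 3*(i:ℕ)+2}) (fun j => {3*t+2*(j:ℕ), 3*t+2*(j:ℕ)+1})

lemma tpG_sub (t p : ℕ) : ∀ i, tpG t p i ⊆ Finset.range (3*t+2*p) := by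
  rintro (i | j) a ha <;> simp [tpG] at ha <;> rw [Finset.mem_range]
  · have := i.isLt; omega
  · have := j.isLt; omega

lemma tpG_disj (t p : ℕ) : ∀ i j a, a ∈ tpG t p i → a ∈ tpG t p j → i = j := by
  rintro (i | i) (j | j) a ha hb <;> simp [tpG] at ha hb
  · have := i.isLt; have := j.isLt
    have : (i : ℕ) = (j : ℕ) := by omega
    exact congrArg Sum.inl (Fin.ext this)
  · have := i.isLt; have := j.isLt; omega
  · have := i.isLt; have := j.isLt; omega
  · have : (i : ℕ) = (j : ℕ) := by omega
    exact congrArg Sum.inr (Fin.ext this)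

lemma tpG_cov (t p : ℕ) : ∀ a, a < 3*t+2*p → ∃ i, a ∈ tpG t p i := by
  intro a ha
  by_cases h : a < 3*t
  · refine ⟨Sum.inl ⟨a/3, by omega⟩, ?_⟩
    simp [tpG]; omega
  · refine ⟨Sum.inr ⟨(a - 3*t)/2, by omega⟩, ?_⟩
    simp [tpG]; omega

lemma tpG_ne (t p : ℕ) : ∀ i, (tpG t p i).Nonempty := by
  rintro (i | j)
  · exact ⟨3*(i:ℕ), by simp [tpG]⟩
  · exact ⟨3*t+2*(j:ℕ), by simp [tpG]⟩

lemma tpG_prod (t p : ℕ) : ∏ i, (tpG t p i).card = 3^t * 2^p := by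
  rw [Fintype.prod_sum_type]
  have h1 : ∀ i : Fin t, (tpG t p (Sum.inl i)).card = 3 := by
    intro i
    apply Finset.card_eq_three.2
    exact ⟨3*(i:ℕ), 3*(i:ℕ)+1, 3*(i:ℕ)+2, by omega, by omega, by omega, rfl⟩
  have h2 : ∀ j : Fin p, (tpG t p (Sum.inr j)).card = 2 := by
    intro j
    apply Finset.card_pair
    omega
  simp only [h1, h2, Finset.prod_const, Finset.card_univ, Fintype.card_fin]

noncomputable def lowerAF (t p : ℕ) : AF := grpAF (3*t+2*p) (tpG t p) (tpG_sub t p)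

lemma lowerAF_card (t p : ℕ) : (lowerAF t p).A.card = 3*t+2*p := by
  simp [lowerAF, grpAF]

lemma lowerAF_ncard (σ : Semantics) (hσ : σ ∈ StandardSemantics) (t p : ℕ) :
    (σ (lowerAF t p)).ncard = 3^t * 2^p := by
  classical
  rw [lowerAF, grp_sigma _ _ _ (tpG_disj t p) (tpG_cov t p) (tpG_ne t p) σ hσ,
    range_tv_ncard _ (tpG_disj t p), tpG_prod]

-- the n = 1 case
noncomputable def oneAF : AF :=
  grpAF 1 (fun _ : Fin 1 => {0}) (fun _ => Finset.singleton_subset_iff.2 (Finset.mem_range.2 Nat.one_pos))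

lemma oneAF_card : oneAF.A.card = 1 := by simp [oneAF, grpAF]

lemma oneAF_ncard (σ : Semantics) (hσ : σ ∈ StandardSemantics) : (σ oneAF).ncard = 1 := by
  classical
  rw [oneAF, grp_sigma _ _ _ (fun i j a _ _ => Subsingleton.elim i j)
      (fun a ha => ⟨0, by rw [Finset.mem_singleton]; omega⟩) (fun i => ⟨0, by simp⟩) σ hσ,
    range_tv_ncard _ (fun i j a _ _ => Subsingleton.elim i j)]
  simp

lemma exists_lower (σ : Semantics) (hσ : σ ∈ StandardSemantics) (n : ℕ) :
    ∃ F : AF, F.A.card = n ∧ (σ F).ncard = mm n := by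
  by_cases h0 : n = 0
  · refine ⟨lowerAF 0 0, ?_, ?_⟩
    · rw [lowerAF_card]; omega
    · rw [lowerAF_ncard σ hσ, h0]; rfl
  by_cases hone : n = 1
  · exact ⟨oneAF, by rw [oneAF_card, hone], by rw [oneAF_ncard σ hσ, hone]; rfl⟩
  have h2 : 2 ≤ n := by omega
  set s := n / 3 with hsdef
  rcases (by omega : (1 ≤ s ∧ n = 3*s) ∨ (1 ≤ s ∧ n = 3*s+1) ∨ (n = 3*s+2))
      with ⟨hs, h⟩ | ⟨hs, h⟩ | h
  · refine ⟨lowerAF s 0, ?_, ?_⟩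
    · rw [lowerAF_card]; omega
    · rw [lowerAF_ncard σ hσ, h, mm_three_mul s hs]; ring
  · refine ⟨lowerAF (s-1) 2, ?_, ?_⟩
    · rw [lowerAF_card]; omega
    · rw [lowerAF_ncard σ hσ, h, mm_three_mul_add_one s hs]; ring
  · refine ⟨lowerAF s 1, ?_, ?_⟩
    · rw [lowerAF_card]; omega
    · rw [lowerAF_ncard σ hσ, h, mm_three_mul_add_two s]; ring

end lower

lemma sigmaMax_eq_mm (σ : Semantics) (hσ : σ ∈ StandardSemantics) (n : ℕ) :
    sigmaMax σ n = mm n := by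
  have hub : ∀ k ∈ {k | ∃ F : AF, F.A.card = n ∧ (σ F).ncard = k}, k ≤ mm n := by
    rintro k ⟨F, hcard, hk⟩
    rw [← hk, ← hcard]
    exact AF.upper_bound σ hσ F
  apply le_antisymm
  · exact csSup_le' hub
  · obtain ⟨F, hc, hv⟩ := exists_lower σ hσ n
    exact le_csSup ⟨mm n, hub⟩ ⟨F, hc, hv⟩


theorem sigmaMax_formula (σ : Semantics) (hσ : σ ∈ StandardSemantics) (n : ℕ) :
    ((n = 0 ∨ n = 1) → sigmaMax σ n = 1) ∧
    (∀ s, 2 ≤ n → n = 3 * s → sigmaMax σ n = 3 ^ s) ∧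
    (∀ s, 2 ≤ n → n = 3 * s + 1 → sigmaMax σ n = 4 * 3 ^ (s - 1)) ∧
    (∀ s, 2 ≤ n → n = 3 * s + 2 → sigmaMax σ n = 2 * 3 ^ s) := by
  refine ⟨?_, ?_, ?_, ?_⟩
  · rintro (rfl | rfl) <;> rw [sigmaMax_eq_mm σ hσ] <;> rfl
  · intro s h2 hn
    rw [sigmaMax_eq_mm σ hσ, hn, mm_three_mul s (by omega)]
  · intro s h2 hn
    rw [sigmaMax_eq_mm σ hσ, hn, mm_three_mul_add_one s (by omega)]
  · intro s h2 hn
    rw [sigmaMax_eq_mm σ hσ, hn, mm_three_mul_add_two s]
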